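/- Let N be a positive even integer and k any integer. Let Φ be the N×N discrete Fresnel transform matrix with entries Φ_{m,n} = (1/√N)·exp(−i·π/4)·exp(i·π·(m−n)²/N), let Δ be the N×N diagonal matrix with Δ_{n,n} = exp(i·2π·n/N), and let Π be the N×N cyclic-shift permutation matrix with Π_{m,n} = 1 if m ≡ n+1 (mod N) and 0 otherwise. Then Φ·Δ^k·Φ^H = exp(i·π·k²/N)·Π^k·Δ^k, where Δ^k and Π^k denote integer (possibly negative) matrix powers of the invertible matrices Δ and Π, and Φ^H is the conjugate transpose of Φ. -/

import Mathlib

open Matrix Complex Real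

/-- The N×N discrete Fresnel transform (DFnT) matrix with
Φ_{m,n} = (1/√N)·exp(−i·π/4)·exp(i·π·(m−n)²/N). -/
noncomputable def PhiMat (N : ℕ) : Matrix (Fin N) (Fin N) ℂ :=
  Matrix.of fun m n =>
    (1 / Real.sqrt N : ℂ) * Complex.exp (-(Real.pi / 4) * Complex.I) *
      Complex.exp (Real.pi * Complex.I * (((m : ℕ) : ℤ) - ((n : ℕ) : ℤ)) ^ 2 / N)

/-- The N×N diagonal "Doppler-shift" matrix Δ with Δ_{n,n} = exp(i·2π·n/N). -/
noncomputable def DeltaMat (N : ℕ) : Matrix (Fin N) (Fin N) ℂ :=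
  Matrix.diagonal fun n => Complex.exp (2 * Real.pi * Complex.I * (n : ℕ) / N)

/-- The N×N cyclic-shift permutation matrix Π with Π_{m,n} = 1 if m ≡ n+1 (mod N). -/
def PiMat (N : ℕ) : Matrix (Fin N) (Fin N) ℂ :=
  Matrix.of fun m n => if (m : ℕ) = ((n : ℕ) + 1) % N then 1 else 0

lemma gsum (N : ℕ) (hN : 0 < N) (a : ℤ) :
    ∑ l : Fin N, Complex.exp (2 * Real.pi * Complex.I * (a : ℂ) * ((l : ℕ) : ℂ) / N) =
      if (N : ℤ) ∣ a then (N : ℂ) else 0 := by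
  have hN0 : (N : ℂ) ≠ 0 := Nat.cast_ne_zero.mpr hN.ne'
  have hterm : ∀ l : Fin N,
      Complex.exp (2 * Real.pi * Complex.I * (a : ℂ) * ((l : ℕ) : ℂ) / N) =
        Complex.exp (2 * Real.pi * Complex.I * (a : ℂ) / N) ^ (l : ℕ) := by
    intro l
    rw [← Complex.exp_nat_mul]
    ring_nf
  simp_rw [hterm]
  rw [Fin.sum_univ_eq_sum_range (fun l => Complex.exp (2 * Real.pi * Complex.I * (a:ℂ) / N) ^ l)]
  have hpi : (Real.pi : ℂ) ≠ 0 := by exact_mod_cast Real.pi_ne_zero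
  have hxiff : Complex.exp (2 * Real.pi * Complex.I * (a : ℂ) / N) = 1 ↔ (N : ℤ) ∣ a := by
    rw [Complex.exp_eq_one_iff]
    constructor
    · rintro ⟨m, hm⟩
      refine ⟨m, ?_⟩
      have : (a : ℂ) = (N : ℂ) * (m : ℂ) := by
        field_simp at hm
        have h2 : (2 * (Real.pi : ℂ) * Complex.I) ≠ 0 := by
          simp [hpi, Complex.I_ne_zero]
        apply mul_left_cancel₀ h2
        linear_combination (2 * (Real.pi : ℂ) * Complex.I) * hm
      exact_mod_cast this
    · rintro ⟨b, hb⟩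
      refine ⟨b, ?_⟩
      have hac : (a : ℂ) = (N : ℂ) * (b : ℂ) := by exact_mod_cast congrArg (Int.cast : ℤ → ℂ) hb
      field_simp [hac]
      exact hac
  by_cases hdvd : (N : ℤ) ∣ a
  · rw [if_pos hdvd, hxiff.mpr hdvd]
    simp
  · rw [if_neg hdvd]
    have hx1 : Complex.exp (2 * Real.pi * Complex.I * (a : ℂ) / N) ≠ 1 :=
      fun h => hdvd (hxiff.mp h)
    rw [geom_sum_eq hx1]
    have hxN : Complex.exp (2 * Real.pi * Complex.I * (a : ℂ) / N) ^ N = 1 := by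
      rw [← Complex.exp_nat_mul]
      have : (N : ℂ) * (2 * Real.pi * Complex.I * (a : ℂ) / N) = (a : ℂ) * (2 * Real.pi * Complex.I) := by
        field_simp
      rw [this, Complex.exp_int_mul_two_pi_mul_I]
    rw [hxN]
    simp

lemma Delta_pow (N n : ℕ) :
    DeltaMat N ^ n =
      Matrix.diagonal fun l : Fin N =>
        Complex.exp (2 * Real.pi * Complex.I * (n : ℂ) * ((l : ℕ) : ℂ) / N) := by
  ext i j
  rw [DeltaMat, Matrix.diagonal_pow, Matrix.diagonal_apply, Matrix.diagonal_apply]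
  by_cases h : i = j
  · rw [if_pos h, if_pos h, Pi.pow_apply, ← Complex.exp_nat_mul]
    ring_nf
  · rw [if_neg h, if_neg h]

lemma Pi_pow_apply (N : ℕ) (hN : 0 < N) (n : ℕ) (i j : Fin N) :
    (PiMat N ^ n) i j = if (i : ℕ) = ((j : ℕ) + n) % N then 1 else 0 := by
  induction n generalizing j with
  | zero =>
    simp only [pow_zero, Matrix.one_apply, Nat.add_zero, Nat.mod_eq_of_lt j.isLt]
    congr 1
    simp [Fin.ext_iff]
  | succ n ih =>
    rw [pow_succ, Matrix.mul_apply]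
    set l0 : Fin N := ⟨((j : ℕ) + 1) % N, Nat.mod_lt _ hN⟩ with hl0
    have hstep : ∀ l : Fin N, (PiMat N ^ n) i l * PiMat N l j =
        if l = l0 then (PiMat N ^ n) i l else 0 := by
      intro l
      rw [PiMat]
      simp only [Matrix.of_apply]
      by_cases h : l = l0
      · rw [if_pos h, if_pos, mul_one]
        rw [h]
      · rw [if_neg h, if_neg, mul_zero]
        intro hc
        exact h (Fin.ext hc)
    simp_rw [hstep]
    rw [Finset.sum_ite_eq' Finset.univ l0 (fun l => (PiMat N ^ n) i l)]
    simp only [Finset.mem_univ, if_true]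
    rw [ih l0]
    have : ((l0 : ℕ) + n) % N = ((j : ℕ) + (n + 1)) % N := by
      show (((j : ℕ) + 1) % N + n) % N = ((j : ℕ) + (n + 1)) % N
      rw [Nat.mod_add_mod]
      congr 1
      omega
    rw [this]

lemma key (N : ℕ) (hN : 0 < N) (hNeven : Even N) (n : ℕ) :
    PhiMat N * DeltaMat N ^ n * (PhiMat N)ᴴ =
      Complex.exp (Real.pi * Complex.I * (n : ℂ) ^ 2 / N) •
        (PiMat N ^ n * DeltaMat N ^ n) := by
  have hN0 : (N : ℂ) ≠ 0 := Nat.cast_ne_zero.mpr hN.ne'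
  have hsq : (Real.sqrt N : ℂ) * (Real.sqrt N : ℂ) = (N : ℂ) := by
    rw [← Complex.ofReal_mul, Real.mul_self_sqrt (Nat.cast_nonneg N)]
    norm_num
  ext i j
  rw [Delta_pow]
  rw [Matrix.smul_apply, Matrix.mul_diagonal, Matrix.mul_apply]
  simp_rw [Matrix.mul_diagonal, Matrix.conjTranspose_apply]
  set a : ℤ := (n : ℤ) + (j : ℕ) - (i : ℕ) with ha
  set C : ℂ := (1 / (N : ℂ)) *
      Complex.exp (Real.pi * Complex.I * ((((i : ℕ) : ℤ) : ℂ) ^ 2 - (((j : ℕ) : ℤ) : ℂ) ^ 2) / N)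
    with hC
  have hterm : ∀ l : Fin N,
      PhiMat N i l * Complex.exp (2 * Real.pi * Complex.I * (n : ℂ) * ((l : ℕ) : ℂ) / N) *
          star (PhiMat N j l) =
        C * Complex.exp (2 * Real.pi * Complex.I * (a : ℂ) * ((l : ℕ) : ℂ) / N) := by
    intro l
    rw [PhiMat]
    simp only [Matrix.of_apply, star_mul', Complex.star_def, ← Complex.exp_conj, _root_.map_mul,
      map_neg, map_div₀, Complex.conj_I, Complex.conj_ofReal, map_pow, map_sub, _root_.map_one,
      map_ofNat, map_natCast, map_intCast]
    rw [hC, ha]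
    calc (1 / ((Real.sqrt N : ℝ) : ℂ)) * Complex.exp (-(Real.pi/4) * Complex.I) * Complex.exp (Real.pi * Complex.I * (((((i : Fin N) : ℕ) : ℤ) : ℂ) - ((((l : Fin N) : ℕ) : ℤ) : ℂ))^2 / (N : ℂ)) * Complex.exp (2 * Real.pi * Complex.I * ((n : ℕ) : ℂ) * (((l : Fin N) : ℕ) : ℂ) / (N : ℂ)) *
          ((1 / ((Real.sqrt N : ℝ) : ℂ)) * Complex.exp (-(Real.pi/4) * -Complex.I) * Complex.exp (Real.pi * -Complex.I * (((((j : Fin N) : ℕ) : ℤ) : ℂ) - ((((l : Fin N) : ℕ) : ℤ) : ℂ))^2 / (N : ℂ)))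
        = (1 / (((Real.sqrt N : ℝ) : ℂ) * ((Real.sqrt N : ℝ) : ℂ))) *
            Complex.exp ((-(Real.pi/4) * Complex.I) + (Real.pi * Complex.I * (((((i : Fin N) : ℕ) : ℤ) : ℂ) - ((((l : Fin N) : ℕ) : ℤ) : ℂ))^2 / (N : ℂ)) + (2 * Real.pi * Complex.I * ((n : ℕ) : ℂ) * (((l : Fin N) : ℕ) : ℂ) / (N : ℂ)) + (-(Real.pi/4) * -Complex.I) + (Real.pi * -Complex.I * (((((j : Fin N) : ℕ) : ℤ) : ℂ) - ((((l : Fin N) : ℕ) : ℤ) : ℂ))^2 / (N : ℂ))) := by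
          rw [Complex.exp_add, Complex.exp_add, Complex.exp_add, Complex.exp_add]
          ring
      _ = (1 / (N : ℂ)) * Complex.exp ((Real.pi * Complex.I * (((((i : Fin N) : ℕ) : ℤ) : ℂ)^2 - ((((j : Fin N) : ℕ) : ℤ) : ℂ)^2) / (N : ℂ)) + (2 * Real.pi * Complex.I * ((((n : ℤ) + ((j : Fin N) : ℕ) - ((i : Fin N) : ℕ) : ℤ)) : ℂ) * (((l : Fin N) : ℕ) : ℂ) / (N : ℂ))) := by
          rw [hsq]
          congr 1
          apply congrArg
          push_cast
          ring
      _ = C * Complex.exp (2 * Real.pi * Complex.I * ((((n : ℤ) + ((j : Fin N) : ℕ) - ((i : Fin N) : ℕ) : ℤ)) : ℂ) * (((l : Fin N) : ℕ) : ℂ) / (N : ℂ)) := by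
          rw [Complex.exp_add, hC]; ring
  simp_rw [hterm]
  rw [← Finset.mul_sum, gsum N hN a]
  rw [Pi_pow_apply N hN n i j]
  have hcond : (N : ℤ) ∣ a ↔ (i : ℕ) = ((j : ℕ) + n) % N := by
    rw [ha]
    constructor
    · rintro ⟨s, hs⟩
      have h1 : ((((j : ℕ) : ℤ) + (n : ℤ)) - ((i : ℕ) : ℤ)) % (N : ℤ) = 0 :=
        Int.emod_eq_zero_of_dvd ⟨s, by linarith⟩
      have h2 : (((j : ℕ) : ℤ) + (n : ℤ)) % (N : ℤ) = (((i : ℕ) : ℤ)) % (N : ℤ) :=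
        Int.emod_eq_emod_iff_emod_sub_eq_zero.mpr h1
      have h3 : (((i : ℕ) : ℤ)) % (N : ℤ) = ((i : ℕ) : ℤ) :=
        Int.emod_eq_of_lt (by positivity) (by exact_mod_cast i.isLt)
      have h4 : (((((j : ℕ) + n) % N : ℕ)) : ℤ) = ((i : ℕ) : ℤ) := by
        push_cast
        rw [h2, h3]
      exact_mod_cast h4.symm
    · intro h
      refine ⟨(((j : ℕ) + n) / N : ℕ), ?_⟩
      have hz := congrArg (Nat.cast : ℕ → ℤ) (Nat.mod_add_div ((j : ℕ) + n) N)
      have hi : ((i : ℕ) : ℤ) = (((((j : ℕ) + n) % N : ℕ)) : ℤ) :=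
        congrArg (Nat.cast : ℕ → ℤ) h
      push_cast at hz hi ⊢
      linarith
  by_cases hd : (N : ℤ) ∣ a
  · rw [if_pos hd, if_pos (hcond.mp hd)]
    obtain ⟨s, hs⟩ := hd
    obtain ⟨u, hu⟩ := hNeven
    have huz : (N : ℤ) = u + u := by exact_mod_cast hu
    set t : ℤ := -s * ((i : ℕ) : ℤ) - (u : ℤ) * s ^ 2 with hT
    have hint : (((i : Fin N) : ℕ) : ℤ) ^ 2 - (((j : Fin N) : ℕ) : ℤ) ^ 2 =
        (n : ℤ) ^ 2 + 2 * ((j : ℕ) : ℤ) * (n : ℤ) + 2 * (N : ℤ) * t := by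
      rw [ha] at hs
      rw [hT]
      linear_combination (-((((i:Fin N):ℕ):ℤ) + (n : ℤ) + (((j:Fin N):ℕ):ℤ) + (N:ℤ)*s)) * hs +
        (-((N:ℤ))*s^2) * huz
    rw [smul_eq_mul, one_mul, hC]
    have hC2 : (((((i : Fin N) : ℕ) : ℤ) : ℂ) ^ 2 - ((((j : Fin N) : ℕ) : ℤ) : ℂ) ^ 2) =
        ((n : ℕ) : ℂ) ^ 2 + 2 * (((j : Fin N) : ℕ) : ℂ) * ((n : ℕ) : ℂ) + 2 * (N : ℂ) * (t : ℂ) := by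
      have := congrArg (fun z : ℤ => (z : ℂ)) hint
      push_cast at this ⊢
      linear_combination this
    have hexp : Real.pi * Complex.I * (((((i : Fin N) : ℕ) : ℤ) : ℂ) ^ 2 - ((((j : Fin N) : ℕ) : ℤ) : ℂ) ^ 2) / (N : ℂ) =
        (Real.pi * Complex.I * ((n : ℕ) : ℂ) ^ 2 / (N : ℂ) +
          2 * Real.pi * Complex.I * ((n : ℕ) : ℂ) * (((j : Fin N) : ℕ) : ℂ) / (N : ℂ)) +
          (t : ℂ) * (2 * Real.pi * Complex.I) := by
      rw [hC2]
      field_simp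
    rw [hexp, Complex.exp_add, Complex.exp_int_mul_two_pi_mul_I, mul_one, ← Complex.exp_add]
    field_simp
  · rw [if_neg hd, if_neg fun h => hd (hcond.mpr h)]
    simp


lemma Delta_pow_N (N : ℕ) (hN : 0 < N) : DeltaMat N ^ N = 1 := by
  have hN0 : (N : ℂ) ≠ 0 := Nat.cast_ne_zero.mpr hN.ne'
  rw [Delta_pow]
  have : (fun l : Fin N => Complex.exp (2 * Real.pi * Complex.I * (N : ℂ) * ((l : ℕ) : ℂ) / N))
      = fun _ => 1 := by
    funext l
    have harg : 2 * Real.pi * Complex.I * (N : ℂ) * ((l : ℕ) : ℂ) / N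
        = (((l : ℕ) : ℤ) : ℂ) * (2 * Real.pi * Complex.I) := by
      push_cast
      field_simp
    rw [harg, Complex.exp_int_mul_two_pi_mul_I]
  rw [this, Matrix.diagonal_one]

lemma Pi_pow_N (N : ℕ) (hN : 0 < N) : PiMat N ^ N = 1 := by
  ext i j
  rw [Pi_pow_apply N hN N, Matrix.one_apply]
  congr 1
  rw [Nat.add_mod_right, Nat.mod_eq_of_lt j.isLt]
  simp [Fin.ext_iff]

lemma pow_reduce (N : ℕ) (hN : 0 < N) (M : Matrix (Fin N) (Fin N) ℂ) (hM : M ^ N = 1) (k : ℤ) :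
    M ^ k = M ^ ((k % (N : ℤ)).toNat) := by
  have hNz : (N : ℤ) ≠ 0 := by exact_mod_cast hN.ne'
  have hinv : M ^ (N - 1) * M = 1 := by
    rw [← pow_succ, Nat.sub_add_cancel hN]
    exact hM
  have hu : IsUnit M.det := Matrix.isUnit_det_of_left_inverse hinv
  have h1 : k = (N : ℤ) * (k / N) + k % N := (Int.mul_ediv_add_emod k N).symm
  calc M ^ k = M ^ ((N : ℤ) * (k / N) + k % N) := by rw [← h1]
    _ = (M ^ (N : ℤ)) ^ (k / (N:ℤ)) * M ^ (k % (N:ℤ)) := by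
        rw [Matrix.zpow_add hu, Matrix.zpow_mul M hu]
    _ = M ^ ((k % (N : ℤ)).toNat) := by
        rw [zpow_natCast, hM, Matrix.one_zpow, one_mul,
          ← zpow_natCast, Int.toNat_of_nonneg (Int.emod_nonneg k hNz)]

lemma scalar_reduce (N : ℕ) (hN : 0 < N) (hNeven : Even N) (k : ℤ) :
    Complex.exp (Real.pi * Complex.I * (k : ℂ) ^ 2 / N) =
      Complex.exp (Real.pi * Complex.I * (((k % (N : ℤ)).toNat : ℕ) : ℂ) ^ 2 / N) := by
  have hN0 : (N : ℂ) ≠ 0 := Nat.cast_ne_zero.mpr hN.ne'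
  have hNz : (N : ℤ) ≠ 0 := by exact_mod_cast hN.ne'
  obtain ⟨u, hu⟩ := hNeven
  have huz : (N : ℤ) = u + u := by exact_mod_cast hu
  set q : ℤ := k / N
  set r : ℤ := k % N with hr
  have hq : k = (N : ℤ) * q + r := (Int.mul_ediv_add_emod k N).symm
  set t : ℤ := (u : ℤ) * q ^ 2 + q * r with ht
  have hint : k ^ 2 = r ^ 2 + 2 * (N : ℤ) * t := by
    rw [ht]
    linear_combination (k + (N : ℤ) * q + r) * hq + ((N : ℤ) * q ^ 2) * huz
  have hrt : ((r.toNat : ℕ) : ℂ) = (r : ℂ) := by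
    exact_mod_cast congrArg (Int.cast : ℤ → ℂ)
      (Int.toNat_of_nonneg (Int.emod_nonneg k hNz))
  rw [hrt]
  have hexp : Real.pi * Complex.I * (k : ℂ) ^ 2 / N
      = Real.pi * Complex.I * (r : ℂ) ^ 2 / N + (t : ℤ) * (2 * Real.pi * Complex.I) := by
    have hc : ((k : ℂ)) ^ 2 = (r : ℂ) ^ 2 + 2 * (N : ℂ) * (t : ℂ) := by
      exact_mod_cast congrArg (Int.cast : ℤ → ℂ) hint
    rw [hc]
    field_simp
  rw [hexp, Complex.exp_add, Complex.exp_int_mul_two_pi_mul_I, mul_one]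

theorem stmt4 (N : ℕ) (hN : 0 < N) (hNeven : Even N) (k : ℤ) :
    PhiMat N * DeltaMat N ^ k * (PhiMat N)ᴴ =
      Complex.exp (Real.pi * Complex.I * (k : ℂ) ^ 2 / N) •
        (PiMat N ^ k * DeltaMat N ^ k) := by
  rw [pow_reduce N hN (DeltaMat N) (Delta_pow_N N hN) k,
    pow_reduce N hN (PiMat N) (Pi_pow_N N hN) k,
    scalar_reduce N hN hNeven k]
  exact key N hN hNeven ((k % (N : ℤ)).toNat)
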